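/- Let β = (β_n) be a Cantor real base and x ∈ [0,1]. The greedy β-expansion of x is lexicographically maximal among all β-representations of x: if a ∈ ℕ^ℕ satisfies val_β(a) = x, then a ≤_lex d_β(x). -/

import Mathlib

open Filter

/-- Product of the first `n+1` terms of the base sequence. -/
noncomputable def cprod (β : ℕ → ℝ) (n : ℕ) : ℝ := ∏ i ∈ Finset.range (n+1), β i

/-- A Cantor real base: all terms exceed 1 and the partial products tend to infinity. -/
def IsCantorBase (β : ℕ → ℝ) : Prop :=
  (∀ n, 1 < β n) ∧ Tendsto (cprod β) atTop atTop

/-- Value of a real-digit sequence in a Cantor base. -/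
noncomputable def valB (β : ℕ → ℝ) (a : ℕ → ℝ) : ℝ := ∑' n, a n / cprod β n

/-- Value of a natural-digit sequence in a Cantor base. -/
noncomputable def valN (β : ℕ → ℝ) (a : ℕ → ℕ) : ℝ := valB β (fun n => (a n : ℝ))

/-- Remainders of the greedy algorithm. -/
noncomputable def greedyRem (β : ℕ → ℝ) (x : ℝ) : ℕ → ℝ
  | 0 => β 0 * x - ⌊β 0 * x⌋
  | n+1 => β (n+1) * greedyRem β x n - ⌊β (n+1) * greedyRem β x n⌋

/-- Digits of the greedy expansion. -/
noncomputable def greedy (β : ℕ → ℝ) (x : ℝ) : ℕ → ℕ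
  | 0 => (⌊β 0 * x⌋).toNat
  | n+1 => (⌊β (n+1) * greedyRem β x n⌋).toNat

/-- Remainders of the quasi-greedy algorithm started at `1`:
at each step the largest digit keeping the remainder strictly positive is chosen. -/
noncomputable def qRem (β : ℕ → ℝ) : ℕ → ℝ
  | 0 => β 0 - (⌈β 0⌉ - 1)
  | n+1 => β (n+1) * qRem β n - (⌈β (n+1) * qRem β n⌉ - 1)

/-- Digits of the quasi-greedy expansion of `1`. -/
noncomputable def quasiGreedy (β : ℕ → ℝ) : ℕ → ℕ
  | 0 => (⌈β 0⌉ - 1).toNat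
  | n+1 => (⌈β (n+1) * qRem β n⌉ - 1).toNat

/-- The `n`-shifted base `β^{(n)}`. -/
def shiftBase (β : ℕ → ℝ) (n : ℕ) : ℕ → ℝ := fun k => β (n + k)

/-- The `n`-fold shift `σ^n` of a digit sequence. -/
def shiftSeq (a : ℕ → ℕ) (n : ℕ) : ℕ → ℕ := fun k => a (n + k)

/-- Strict lexicographic order on digit sequences. -/
def LexLt (a b : ℕ → ℕ) : Prop := ∃ ℓ, (∀ k, k < ℓ → a k = b k) ∧ a ℓ < b ℓ

/-- Lexicographic order on digit sequences. -/
def LexLe (a b : ℕ → ℕ) : Prop := LexLt a b ∨ a = b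

/-- The set of greedy expansions of points of `[0,1)`. -/
def Dset (β : ℕ → ℝ) : Set (ℕ → ℕ) := {a | ∃ x ∈ Set.Ico (0:ℝ) 1, a = greedy β x}

section Aux

variable (β : ℕ → ℝ) (x : ℝ)

lemma cprod_pos (hβ : ∀ n, 1 < β n) (n : ℕ) : 0 < cprod β n :=
  Finset.prod_pos fun i _ => lt_trans one_pos (hβ i)

lemma rem_nonneg (n : ℕ) : 0 ≤ greedyRem β x n := by
  cases n with
  | zero => exact sub_nonneg.2 (Int.floor_le _)
  | succ n => exact sub_nonneg.2 (Int.floor_le _)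

lemma greedy_cast0 (hβ : ∀ n, 1 < β n) (hx : 0 ≤ x) :
    ((greedy β x 0 : ℕ) : ℝ) = (⌊β 0 * x⌋ : ℤ) := by
  show ((⌊β 0 * x⌋.toNat : ℕ) : ℝ) = _
  exact_mod_cast congrArg (Int.cast : ℤ → ℝ)
    (Int.toNat_of_nonneg (Int.floor_nonneg.2 (mul_nonneg (le_of_lt (lt_trans one_pos (hβ 0))) hx)))

lemma greedy_cast_succ (hβ : ∀ n, 1 < β n) (n : ℕ) :
    ((greedy β x (n+1) : ℕ) : ℝ) = (⌊β (n+1) * greedyRem β x n⌋ : ℤ) := by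
  show ((⌊β (n+1) * greedyRem β x n⌋.toNat : ℕ) : ℝ) = _
  exact_mod_cast congrArg (Int.cast : ℤ → ℝ)
    (Int.toNat_of_nonneg (Int.floor_nonneg.2 (mul_nonneg (le_of_lt (lt_trans one_pos (hβ _))) (rem_nonneg β x n))))

lemma expansion (hβ : ∀ n, 1 < β n) (hx : 0 ≤ x) (n : ℕ) :
    (∑ k ∈ Finset.range (n+1), (greedy β x k : ℝ) / cprod β k)
      + greedyRem β x n / cprod β n = x := by
  induction n with
  | zero =>
    have hc : cprod β 0 = β 0 := by simp [cprod]
    have hb : (0:ℝ) < β 0 := lt_trans one_pos (hβ 0)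
    have hg := greedy_cast0 β x hβ hx
    rw [Finset.sum_range_one, hg, hc]
    show (⌊β 0 * x⌋ : ℝ) / β 0 + (β 0 * x - ⌊β 0 * x⌋) / β 0 = x
    field_simp
    ring
  | succ n ih =>
    have hb : (0:ℝ) < β (n+1) := lt_trans one_pos (hβ _)
    have hcn : (0:ℝ) < cprod β n := cprod_pos β hβ n
    have hc : cprod β (n+1) = cprod β n * β (n+1) := Finset.prod_range_succ _ _
    have hg := greedy_cast_succ β x hβ n
    rw [Finset.sum_range_succ]
    have : (greedy β x (n+1) : ℝ) / cprod β (n+1) + greedyRem β x (n+1) / cprod β (n+1)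
        = greedyRem β x n / cprod β n := by
      rw [hg, hc]
      show (⌊β (n+1) * greedyRem β x n⌋ : ℝ) / (cprod β n * β (n+1))
        + (β (n+1) * greedyRem β x n - ⌊β (n+1) * greedyRem β x n⌋) / (cprod β n * β (n+1))
        = greedyRem β x n / cprod β n
      field_simp
      ring
    linarith [ih, this]

lemma key_bound (hβ : ∀ n, 1 < β n) (hx : 0 ≤ x) (a : ℕ → ℕ)
    (hsum : Summable (fun n => (a n : ℝ) / cprod β n)) (hval : valN β a = x)
    (ℓ : ℕ) (hagree : ∀ k, k < ℓ → a k = greedy β x k) :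
    a ℓ ≤ greedy β x ℓ := by
  have hcpos : ∀ n, (0:ℝ) < cprod β n := cprod_pos β hβ
  have hsplit := Summable.sum_add_tsum_nat_add ℓ hsum
  have htail : ((a ℓ : ℝ)) / cprod β ℓ ≤ ∑' i, ((a (i + ℓ) : ℝ)) / cprod β (i + ℓ) := by
    have hs : Summable (fun i => ((a (i + ℓ) : ℝ)) / cprod β (i + ℓ)) :=
      (summable_nat_add_iff (f := fun n => ((a n : ℝ)) / cprod β n) ℓ).2 hsum
    have := Summable.le_tsum hs 0 (fun j _ => div_nonneg (Nat.cast_nonneg _) (hcpos _).le)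
    simpa using this
  have hvv : (∑' n, ((a n : ℝ)) / cprod β n) = x := hval
  have hT : ((a ℓ : ℝ)) / cprod β ℓ ≤ x - ∑ k ∈ Finset.range ℓ, ((a k : ℝ)) / cprod β k := by
    rw [← hvv, ← hsplit]; linarith
  cases ℓ with
  | zero =>
    have hc : cprod β 0 = β 0 := by simp [cprod]
    have hb : (0:ℝ) < β 0 := lt_trans one_pos (hβ 0)
    have h1 : ((a 0 : ℝ)) ≤ β 0 * x := by
      have := hT
      simp only [Finset.range_zero, Finset.sum_empty, sub_zero, hc] at this
      calc ((a 0:ℝ)) = (a 0 : ℝ) / β 0 * β 0 := by field_simp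
        _ ≤ x * β 0 := by exact mul_le_mul_of_nonneg_right this hb.le
        _ = β 0 * x := mul_comm _ _
    have h2 : ((a 0 : ℕ) : ℤ) ≤ ⌊β 0 * x⌋ := Int.le_floor.2 (by exact_mod_cast h1)
    show a 0 ≤ (⌊β 0 * x⌋).toNat
    exact (Int.le_toNat (le_trans (Int.ofNat_nonneg _) h2)).2 h2
  | succ n =>
    have hb : (0:ℝ) < β (n+1) := lt_trans one_pos (hβ _)
    have hc : cprod β (n+1) = cprod β n * β (n+1) := Finset.prod_range_succ _ _
    have hsumeq : ∑ k ∈ Finset.range (n+1), ((a k : ℝ)) / cprod β k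
        = ∑ k ∈ Finset.range (n+1), ((greedy β x k : ℝ)) / cprod β k := by
      refine Finset.sum_congr rfl fun k hk => ?_
      rw [hagree k (Finset.mem_range.1 hk)]
    have hexp := expansion β x hβ hx n
    have hT' : ((a (n+1) : ℝ)) / cprod β (n+1) ≤ greedyRem β x n / cprod β n := by
      rw [hsumeq] at hT; linarith
    have h1 : ((a (n+1) : ℝ)) ≤ β (n+1) * greedyRem β x n := by
      have hcn := hcpos n
      rw [hc] at hT'
      rw [div_le_div_iff₀ (by positivity) hcn] at hT'
      nlinarith [hcpos n]
    have h2 : ((a (n+1) : ℕ) : ℤ) ≤ ⌊β (n+1) * greedyRem β x n⌋ :=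
      Int.le_floor.2 (by exact_mod_cast h1)
    show a (n+1) ≤ (⌊β (n+1) * greedyRem β x n⌋).toNat
    exact (Int.le_toNat (le_trans (Int.ofNat_nonneg _) h2)).2 h2

end Aux

theorem stmt_7 (β : ℕ → ℝ) (hβ : IsCantorBase β) (x : ℝ)
    (hx : x ∈ Set.Icc (0:ℝ) 1) (a : ℕ → ℕ)
    (hsum : Summable (fun n => (a n : ℝ) / cprod β n)) (hval : valN β a = x) :
    LexLe a (greedy β x) := by
  by_cases h : ∀ n, a n = greedy β x n
  · exact Or.inr (funext h)
  · push_neg at h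
    left
    classical
    let ℓ := Nat.find h
    have hne : a ℓ ≠ greedy β x ℓ := Nat.find_spec h
    have hagree : ∀ k, k < ℓ → a k = greedy β x k := fun k hk => by
      by_contra hc
      exact absurd (Nat.find_le hc) (not_le.2 hk)
    have hle := key_bound β x hβ.1 hx.1 a hsum hval ℓ hagree
    exact ⟨ℓ, hagree, lt_of_le_of_ne hle hne⟩
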